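/- arXiv:2107.03211 — 2 statements merged into one kernel-verified Lean document; each statement's English description precedes it below -/
import Mathlib

section
/- If X is an infinite compact Hausdorff space and Y is an infinite pseudocompact Tychonoff space, then there is no continuous linear surjection from C_p(X×Y) onto C_p(X, C_p(Y)). -/
open Filter Topology

set_option linter.unusedVariables false

/-- `C_p(X, E)`: the submodule of `X → E` (with the product, i.e. pointwise, topology)
consisting of all continuous functions from `X` to `E`.  The coerced type `↥(Cp X E)` carries
the subspace topology, i.e. the topology of pointwise convergence. -/
def Cp (X E : Type*) [TopologicalSpace X] [TopologicalSpace E]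
    [AddCommGroup E] [Module ℝ E] [ContinuousAdd E] [ContinuousSMul ℝ E] :
    Submodule ℝ (X → E) where
  carrier := {f | Continuous f}
  add_mem' hf hg := hf.add hg
  zero_mem' := continuous_const
  smul_mem' c f hf := hf.const_smul c

/-- `(c₀)_p`: the space of real sequences converging to `0`, as a submodule of `ℕ → ℝ`;
the coerced type carries the topology of pointwise convergence inherited from `ℝ^ℕ`. -/
def c0p : Submodule ℝ (ℕ → ℝ) where
  carrier := {x | Tendsto x atTop (𝓝 0)}
  add_mem' hx hy := by simpa [Pi.add_def] using Filter.Tendsto.add hx hy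
  zero_mem' := tendsto_const_nhds
  smul_mem' c x hx := by simpa [Pi.smul_def] using Filter.Tendsto.const_smul hx c

/-- A topological vector space `E` contains a complemented copy of `F`: there is a closed
linear subspace `E₁` of `E` which is linearly homeomorphic to `F` and a continuous linear
projection from `E` onto `E₁`. -/
def HasComplementedCopy (E : Type*) [TopologicalSpace E] [AddCommGroup E] [Module ℝ E]
    (F : Type*) [TopologicalSpace F] [AddCommGroup F] [Module ℝ F] : Prop :=
  ∃ E₁ : Submodule ℝ E, IsClosed (E₁ : Set E) ∧ Nonempty (E₁ ≃L[ℝ] F) ∧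
    ∃ P : E →L[ℝ] E, Set.range P = (E₁ : Set E) ∧ ∀ x ∈ E₁, P x = x

/-- A function `f : X × Y → ℝ` is separately continuous. -/
def SepCont {X Y : Type*} [TopologicalSpace X] [TopologicalSpace Y] (f : X × Y → ℝ) : Prop :=
  (∀ x, Continuous fun y => f (x, y)) ∧ (∀ y, Continuous fun x => f (x, y))

/-- `SC_p(X × Y)`: the submodule of `X × Y → ℝ` consisting of all separately continuous
functions; the coerced type carries the topology of pointwise convergence. -/
def SCp (X Y : Type*) [TopologicalSpace X] [TopologicalSpace Y] : Submodule ℝ (X × Y → ℝ) where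
  carrier := {f | SepCont f}
  add_mem' hf hg := ⟨fun x => (hf.1 x).add (hg.1 x), fun y => (hf.2 y).add (hg.2 y)⟩
  zero_mem' := ⟨fun _ => continuous_const, fun _ => continuous_const⟩
  smul_mem' c f hf := ⟨fun x => (hf.1 x).const_smul c, fun y => (hf.2 y).const_smul c⟩

/-- The topology `σ` on `X × Y`: the coarsest topology making every separately continuous
real-valued function on `X × Y` continuous. -/
def sigmaTop (X Y : Type*) [TopologicalSpace X] [TopologicalSpace Y] :
    TopologicalSpace (X × Y) :=
  ⨅ f : {f : X × Y → ℝ // SepCont f}, TopologicalSpace.induced f.1 inferInstance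

/-- The action of a finite linear combination `μ = Σ_z μ(z)·δ_z` of Dirac functionals
on a function `f`. -/
noncomputable def finComboApply {Z : Type*} (μ : Z →₀ ℝ) (f : Z → ℝ) : ℝ :=
  μ.sum fun z a => a * f z

/-- `μ` is a JN-sequence on the topological space `Z`: each `μ n` is a finite linear
combination of Dirac functionals of norm `Σ_z |μ n z| = 1`, and `μ n (f) → 0` for every
continuous `f : Z → ℝ`. -/
def IsJNSeq (Z : Type*) [TopologicalSpace Z] (μ : ℕ → Z →₀ ℝ) : Prop :=
  (∀ n, ((μ n).sum fun _ a => |a|) = 1) ∧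
    ∀ f : Z → ℝ, Continuous f → Tendsto (fun n => finComboApply (μ n) f) atTop (𝓝 0)

/-- `Z` admits a JN-sequence. -/
def HasJNSeq (Z : Type*) [TopologicalSpace Z] : Prop := ∃ μ, IsJNSeq Z μ

/-- A space is pseudocompact if every continuous real-valued function on it is bounded. -/
def Pseudocompact (Z : Type*) [TopologicalSpace Z] : Prop :=
  ∀ f : Z → ℝ, Continuous f → Bornology.IsBounded (Set.range f)

/-- The action of a finite linear combination `Σ_{(x,y)} ν(x,y)·(δ_x ⊗ δ_y)` of tensor
products of Dirac functionals on an element of `C_p(X, C_p(Y))`. -/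
noncomputable def tensorApply {X Y : Type*} [TopologicalSpace X] [TopologicalSpace Y]
    (ν : (X × Y) →₀ ℝ) (f : ↥(Cp X ↥(Cp Y ℝ))) : ℝ :=
  ν.sum fun p a => a * (f.1 p.1).1 p.2

/- ### Auxiliary lemmas -/


/-- In an infinite Hausdorff space, every infinite open set contains a nonempty open set
and a disjoint infinite open set. -/
lemma JN.step_lemma {Z : Type*} [TopologicalSpace Z] [T2Space Z]
    {W : Set Z} (hWo : IsOpen W) (hWi : W.Infinite) :
    ∃ U W' : Set Z, U.Nonempty ∧ IsOpen U ∧ U ⊆ W ∧ IsOpen W' ∧ W'.Infinite ∧ W' ⊆ W ∧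
      Disjoint U W' := by
  obtain ⟨b, hbW, hba⟩ : ∃ b, b ∈ W \ {hWi.nonempty.choose} :=
    (hWi.diff (Set.finite_singleton _)).nonempty
  set a := hWi.nonempty.choose with ha_def
  have haW : a ∈ W := hWi.nonempty.choose_spec
  have hab : a ≠ b := fun h => hba (by simp [h])
  obtain ⟨A', B', hA'o, hB'o, haA, hbB, hABd⟩ := t2_separation hab
  set A := A' ∩ W with hA
  set B := B' ∩ W with hB
  have hAo : IsOpen A := hA'o.inter hWo
  have hBo : IsOpen B := hB'o.inter hWo
  have haA' : a ∈ A := ⟨haA, haW⟩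
  have hbB' : b ∈ B := ⟨hbB, hbW⟩
  have hABdisj : Disjoint A B :=
    hABd.mono (Set.inter_subset_left) (Set.inter_subset_left)
  by_cases hAi : A.Infinite
  · exact ⟨B, A, ⟨b, hbB'⟩, hBo, Set.inter_subset_right, hAo, hAi,
      Set.inter_subset_right, hABdisj.symm⟩
  · have hAfin : A.Finite := Set.not_infinite.mp hAi
    have hopen : IsOpen ({a} : Set Z) := by
      have : ({a} : Set Z) = A ∩ (A \ {a})ᶜ := by
        apply Set.eq_of_subset_of_subset
        · intro x hx; simp at hx; subst hx; exact ⟨haA', by simp⟩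
        · intro x hx; rcases hx with ⟨hx1, hx2⟩
          simp only [Set.mem_compl_iff, Set.mem_diff, not_and, not_not] at hx2
          exact hx2 hx1
      rw [this]
      exact hAo.inter (Set.Finite.diff hAfin : (A \ {a}).Finite).isClosed.isOpen_compl
    refine ⟨{a}, W \ {a}, ⟨a, rfl⟩, hopen, by simpa using haW,
      hWo.sdiff isClosed_singleton, hWi.diff (Set.finite_singleton a),
      Set.diff_subset, ?_⟩
    exact Set.disjoint_left.mpr (fun x hx hx2 => hx2.2 hx)

/-- Every infinite Hausdorff space has an infinite cellular family. -/
lemma JN.cellular_family (Z : Type*) [TopologicalSpace Z] [T2Space Z] [Infinite Z] :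
    ∃ U : ℕ → Set Z, (∀ n, (U n).Nonempty) ∧ (∀ n, IsOpen (U n)) ∧
      ∀ m n, m ≠ n → Disjoint (U m) (U n) := by
  have key : ∀ (W : {S : Set Z // IsOpen S ∧ S.Infinite}),
      ∃ p : Set Z × {S : Set Z // IsOpen S ∧ S.Infinite},
        p.1.Nonempty ∧ IsOpen p.1 ∧ p.1 ⊆ W.1 ∧ p.2.1 ⊆ W.1 ∧ Disjoint p.1 p.2.1 := by
    rintro ⟨W, hWo, hWi⟩
    obtain ⟨U, W', hUne, hUo, hUW, hW'o, hW'i, hW'W, hd⟩ := JN.step_lemma hWo hWi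
    exact ⟨(U, ⟨W', hW'o, hW'i⟩), hUne, hUo, hUW, hW'W, hd⟩
  choose step hne ho hsub hsub' hdisj using key
  let F : ℕ → Set Z × {S : Set Z // IsOpen S ∧ S.Infinite} := fun n =>
    Nat.rec (step ⟨Set.univ, isOpen_univ, Set.infinite_univ⟩)
      (fun _ p => step p.2) n
  have hFsucc : ∀ n, F (n + 1) = step (F n).2 := fun n => rfl
  refine ⟨fun n => (F n).1, fun n => ?_, fun n => ?_, ?_⟩
  · show (F n).1.Nonempty
    cases n with
    | zero => exact hne _
    | succ m => rw [hFsucc]; exact hne _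
  · show IsOpen (F n).1
    cases n with
    | zero => exact ho _
    | succ m => rw [hFsucc]; exact ho _
  · have hchain : ∀ n, (F (n + 1)).1 ⊆ ((F n).2 : Set Z) ∧
        (F (n + 1)).2.1 ⊆ ((F n).2 : Set Z) := by
      intro n
      rw [hFsucc]
      exact ⟨hsub _, hsub' _⟩
    have hmono : ∀ m n, m ≤ n → (F n).2.1 ⊆ (F m).2.1 := by
      intro m n hmn
      induction n with
      | zero => simp_all
      | succ k ih =>
        rcases Nat.lt_or_ge m (k+1) with h | h
        · exact ((hchain k).2).trans (ih (Nat.lt_succ_iff.mp h))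
        · have : m = k + 1 := le_antisymm hmn h
          subst this; exact subset_rfl
    have hkey : ∀ m n, m < n → Disjoint (F m).1 (F n).1 := by
      intro m n hmn
      have h1 : (F n).1 ⊆ (F m).2.1 := by
        obtain ⟨k, rfl⟩ : ∃ k, n = k + 1 := ⟨n - 1, by omega⟩
        exact ((hchain k).1).trans (hmono m k (by omega))
      have hd : Disjoint (F m).1 (F m).2.1 := by
        cases m with
        | zero => exact hdisj _
        | succ j => rw [hFsucc]; exact hdisj _
      exact hd.mono_right h1
    intro m n hmn
    rcases Nat.lt_or_ge m n with h | h
    · exact hkey m n h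
    · exact (hkey n m (lt_of_le_of_ne h (Ne.symm hmn))).symm

/-- In an infinite T₃.₅ space there is a sequence of continuous bump functions with
pairwise "disjoint supports" together with points where they take the value `1`. -/
lemma JN.bumps (Z : Type*) [TopologicalSpace Z] [T35Space Z] [Infinite Z] :
    ∃ (z : ℕ → Z) (u : ℕ → Z → ℝ), (∀ n, Continuous (u n)) ∧ (∀ n, u n (z n) = 1) ∧
      (∀ m n x, m ≠ n → u m x ≠ 0 → u n x = 0) := by
  obtain ⟨U, hUne, hUo, hUd⟩ := JN.cellular_family Z
  choose z hz using hUne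
  have hb : ∀ n, ∃ u : Z → ℝ, Continuous u ∧ u (z n) = 1 ∧ ∀ w, w ∉ U n → u w = 0 := by
    intro n
    obtain ⟨f, hf, hf0, hf1⟩ := CompletelyRegularSpace.completely_regular (z n) (U n)ᶜ
      (hUo n).isClosed_compl (by simpa using hz n)
    refine ⟨fun w => 1 - (f w : ℝ), by continuity, by simp only []; rw [hf0]; norm_num,
      fun w hw => ?_⟩
    have : f w = 1 := hf1 hw
    simp only []; rw [this]; norm_num
  choose u hu hu1 hu0 using hb
  refine ⟨z, u, hu, hu1, fun m n x hmn hm => ?_⟩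
  by_contra hn
  have hxm : x ∈ U m := by by_contra hh; exact hm (hu0 m x hh)
  have hxn : x ∈ U n := by by_contra hh; exact hn (hu0 n x hh)
  exact (Set.disjoint_left.mp (hUd m n hmn) hxm) hxn

/-- Any continuous linear functional on `C_p(Z)` is uniformly bounded on uniformly
bounded sets of functions. -/
lemma JN.cp_bound {Z : Type*} [TopologicalSpace Z] (φ : ↥(Cp Z ℝ) →L[ℝ] ℝ) :
    ∃ M : ℝ, 0 ≤ M ∧ ∀ (f : ↥(Cp Z ℝ)) (b : ℝ), 0 < b → (∀ z, |(f : Z → ℝ) z| ≤ b) →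
      |φ f| ≤ b * M := by
  have hnb : φ ⁻¹' Set.Ioo (-1 : ℝ) 1 ∈ 𝓝 (0 : ↥(Cp Z ℝ)) := by
    have := φ.continuous.continuousAt (x := 0)
    apply this.preimage_mem_nhds
    rw [map_zero]
    exact Ioo_mem_nhds (by norm_num) one_pos
  rw [nhds_subtype_eq_comap, Filter.mem_comap] at hnb
  obtain ⟨t, ht, hsub⟩ := hnb
  have ht' : t ∈ 𝓝 (0 : Z → ℝ) := by
    convert ht using 2
    rfl
  rw [nhds_pi, Filter.mem_pi] at ht'
  obtain ⟨I, hIfin, V, hV, hVsub⟩ := ht'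
  choose ε hεpos hball using fun z => Metric.mem_nhds_iff.mp (hV z)
  obtain ⟨ε₀, hε₀, hle⟩ : ∃ ε₀ > 0, ∀ z ∈ I, ε₀ ≤ ε z := by
    by_cases hI : I.Nonempty
    · obtain ⟨z₀, hz₀⟩ := hI
      set s := hIfin.toFinset.image ε with hs_def
      have hs : s.Nonempty :=
        ⟨ε z₀, Finset.mem_image.mpr ⟨z₀, hIfin.mem_toFinset.mpr hz₀, rfl⟩⟩
      refine ⟨s.min' hs, ?_, fun z hz => Finset.min'_le _ _
        (Finset.mem_image.mpr ⟨z, hIfin.mem_toFinset.mpr hz, rfl⟩)⟩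
      obtain ⟨z, hz, hzz⟩ := Finset.mem_image.mp (s.min'_mem hs)
      rw [← hzz]; exact hεpos z
    · exact ⟨1, one_pos, fun z hz => absurd ⟨z, hz⟩ hI⟩
  refine ⟨2 / ε₀, by positivity, fun f b hb hbd => ?_⟩
  set c : ℝ := ε₀ / (2 * b) with hc_def
  have hc : 0 < c := by positivity
  set g : ↥(Cp Z ℝ) := c • f with hg_def
  have hgz : ∀ z, (g : Z → ℝ) z = c * (f : Z → ℝ) z := by
    intro z
    rw [hg_def]
    simp [Submodule.coe_smul]
  have hgt : (g : Z → ℝ) ∈ t := by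
    apply hVsub
    rw [Set.mem_pi]
    intro z hz
    apply hball z
    rw [Metric.mem_ball]
    have hd : dist ((g : Z → ℝ) z) ((0 : Z → ℝ) z) = |(g : Z → ℝ) z| := by
      simp [Real.dist_eq]
    rw [hd, hgz z]
    have h1 : |c * (f : Z → ℝ) z| = c * |(f : Z → ℝ) z| := by
      rw [abs_mul, abs_of_pos hc]
    rw [h1]
    have h2 : c * |(f : Z → ℝ) z| ≤ c * b :=
      mul_le_mul_of_nonneg_left (hbd z) hc.le
    have h3 : c * b = ε₀ / 2 := by
      field_simp [hc_def]
      rw [hc_def]; field_simp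
    calc c * |(f : Z → ℝ) z| ≤ c * b := h2
      _ = ε₀ / 2 := h3
      _ < ε₀ := by linarith [hε₀]
      _ ≤ ε z := hle z hz
  have hφg : |φ g| < 1 := by
    have hmem : g ∈ φ ⁻¹' Set.Ioo (-1 : ℝ) 1 := hsub hgt
    rw [Set.mem_preimage, Set.mem_Ioo] at hmem
    rw [abs_lt]; exact hmem
  have hφgc : φ g = c * φ f := by
    rw [hg_def, map_smul, smul_eq_mul]
  rw [hφgc, abs_mul, abs_of_pos hc] at hφg
  have hfin : |φ f| ≤ 1 / c := by
    rw [le_div_iff₀ hc]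
    linarith [hφg]
  calc |φ f| ≤ 1 / c := hfin
    _ = b * (2 / ε₀) := by
        rw [hc_def]
        field_simp

/-- A continuous real function on the product of a compact space and a pseudocompact
space is bounded. -/
lemma JN.prod_bounded {X Y : Type*} [TopologicalSpace X] [CompactSpace X] [T2Space X]
    [TopologicalSpace Y] (hY : Pseudocompact Y) (f : X × Y → ℝ) (hf : Continuous f) :
    ∃ b : ℝ, 0 < b ∧ ∀ p : X × Y, |f p| ≤ b := by
  let fc : C(Y × X, ℝ) := ⟨fun q => f (q.2, q.1), hf.comp (continuous_swap)⟩
  let k : C(Y, C(X, ℝ)) := fc.curry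
  have hk : Continuous fun y => ‖k y‖ := continuous_norm.comp k.continuous
  have hbd := hY _ hk
  rw [isBounded_iff_forall_norm_le] at hbd
  obtain ⟨C, hC⟩ := hbd
  refine ⟨|C| + 1, by positivity, fun p => ?_⟩
  have h1 : ‖k p.2‖ ≤ C := by
    have := hC ‖k p.2‖ ⟨p.2, rfl⟩
    rwa [Real.norm_eq_abs, abs_of_nonneg (norm_nonneg _)] at this
  have h2 : |f p| = ‖(k p.2) p.1‖ := by
    simp [k, fc, ContinuousMap.curry_apply]
  rw [h2]
  calc ‖(k p.2) p.1‖ ≤ ‖k p.2‖ := ContinuousMap.norm_coe_le_norm _ _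
    _ ≤ C := h1
    _ ≤ |C| + 1 := by cases abs_cases C <;> linarith

/-- Evaluation at a point `(x, y)` as a continuous linear functional on `C_p(X, C_p(Y))`. -/
noncomputable def JN.evCLM {X Y : Type*} [TopologicalSpace X] [TopologicalSpace Y]
    (x : X) (y : Y) : ↥(Cp X ↥(Cp Y ℝ)) →L[ℝ] ℝ where
  toFun g := (((g : X → ↥(Cp Y ℝ)) x : Y → ℝ)) y
  map_add' g g' := by simp
  map_smul' c g := by simp
  cont := by
    apply (continuous_apply y).comp
    apply continuous_subtype_val.comp
    exact (continuous_apply x).comp continuous_subtype_val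

/-- If `X` is an infinite compact Hausdorff space and `Y` is an infinite
pseudocompact Tychonoff space, then there is no continuous linear surjection from
`C_p(X×Y)` onto `C_p(X, C_p(Y))`. -/
theorem statement5 (X Y : Type*) [TopologicalSpace X] [CompactSpace X] [T2Space X]
    [Infinite X] [TopologicalSpace Y] [T35Space Y] [Infinite Y] (hY : Pseudocompact Y) :
    ¬ ∃ T : ↥(Cp (X × Y) ℝ) →L[ℝ] ↥(Cp X ↥(Cp Y ℝ)), Function.Surjective T := by
  rintro ⟨T, hT⟩
  -- a pointwise bound for the functionals `f ↦ (T f x) y`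
  have hMex := fun p : X × Y => JN.cp_bound ((JN.evCLM p.1 p.2).comp T)
  choose M hM0 hM using hMex
  -- bump functions on X and Y
  obtain ⟨zx, u, hu_cont, hu1, hu_disj⟩ := JN.bumps X
  obtain ⟨zy, v, hv_cont, hv1, hv_disj⟩ := JN.bumps Y
  set c : ℕ → ℝ := fun n => ((n : ℝ) + 1) * (M (zx n, zy n) + 1) with hc_def
  set h : X → Y → ℝ := fun x y => ∑' n, c n * (u n x * v n y) with hh_def
  -- slice computations
  have hxslice : ∀ x : X, Continuous fun y => h x y := by
    intro x
    by_cases hex : ∃ N, u N x ≠ 0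
    · obtain ⟨N, hN⟩ := hex
      have heq : (fun y => h x y) = fun y => c N * (u N x * v N y) := by
        funext y
        exact tsum_eq_single N (fun m hm => by
          rw [hu_disj N m x (Ne.symm hm) hN]; ring)
      rw [heq]
      exact continuous_const.mul (continuous_const.mul (hv_cont N))
    · push_neg at hex
      have heq : (fun y => h x y) = fun _ => (0 : ℝ) := by
        funext y
        have : (fun n => c n * (u n x * v n y)) = fun _ => (0 : ℝ) := by
          funext n; rw [hex n]; ring
        show (∑' n, c n * (u n x * v n y)) = 0
        rw [this, tsum_zero]
      rw [heq]
      exact continuous_const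
  have hyslice : ∀ y : Y, Continuous fun x => h x y := by
    intro y
    by_cases hex : ∃ N, v N y ≠ 0
    · obtain ⟨N, hN⟩ := hex
      have heq : (fun x => h x y) = fun x => c N * (u N x * v N y) := by
        funext x
        exact tsum_eq_single N (fun m hm => by
          rw [hv_disj N m y (Ne.symm hm) hN]; ring)
      rw [heq]
      exact continuous_const.mul ((hu_cont N).mul continuous_const)
    · push_neg at hex
      have heq : (fun x => h x y) = fun _ => (0 : ℝ) := by
        funext x
        have : (fun n => c n * (u n x * v n y)) = fun _ => (0 : ℝ) := by
          funext n; rw [hex n]; ring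
        show (∑' n, c n * (u n x * v n y)) = 0
        rw [this, tsum_zero]
      rw [heq]
      exact continuous_const
  have hval : ∀ n, h (zx n) (zy n) = c n := by
    intro n
    have : h (zx n) (zy n) = c n * (u n (zx n) * v n (zy n)) := by
      apply tsum_eq_single n
      intro m hm
      have hu0 : u m (zx n) = 0 := by
        apply hu_disj n m (zx n) (Ne.symm hm)
        rw [hu1 n]; norm_num
      rw [hu0]; ring
    rw [this, hu1 n, hv1 n]; ring
  -- the separately continuous function as an element of `C_p(X, C_p(Y))`
  have hGmem : (fun x => (⟨h x, hxslice x⟩ : ↥(Cp Y ℝ))) ∈ Cp X ↥(Cp Y ℝ) := by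
    show Continuous fun x => (⟨h x, hxslice x⟩ : ↥(Cp Y ℝ))
    apply Continuous.subtype_mk
    exact continuous_pi (fun y => hyslice y)
  set G : ↥(Cp X ↥(Cp Y ℝ)) := ⟨fun x => ⟨h x, hxslice x⟩, hGmem⟩ with hG_def
  obtain ⟨f, hf⟩ := hT G
  -- `f` is continuous on the pseudocompact product, hence bounded
  have hfc : Continuous (f : X × Y → ℝ) := f.2
  obtain ⟨b, hb, hfb⟩ := JN.prod_bounded hY (f : X × Y → ℝ) hfc
  -- evaluate the bound at the points `(zx n, zy n)`
  have hbound : ∀ n : ℕ, |h (zx n) (zy n)| ≤ b * M (zx n, zy n) := by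
    intro n
    have h1 := hM (zx n, zy n) f b hb hfb
    have h2 : ((JN.evCLM (X := X) (Y := Y) (zx n) (zy n)).comp T) f = h (zx n) (zy n) := by
      rw [ContinuousLinearMap.comp_apply, hf]
      rfl
    rwa [h2] at h1
  -- choose n with n ≥ b and derive a contradiction
  obtain ⟨n, hn⟩ := exists_nat_ge b
  have hMn := hM0 (zx n, zy n)
  have hcn : h (zx n) (zy n) = ((n : ℝ) + 1) * (M (zx n, zy n) + 1) := by
    rw [hval n]
  have hpos : (0 : ℝ) ≤ ((n : ℝ) + 1) * (M (zx n, zy n) + 1) := by positivity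
  have habs : |h (zx n) (zy n)| = ((n : ℝ) + 1) * (M (zx n, zy n) + 1) := by
    rw [hcn, abs_of_nonneg hpos]
  have := hbound n
  rw [habs] at this
  nlinarith [hMn, hb, hn]
end

section
/- For every infinite compact Hausdorff space X, the spaces C_p(X) and C(X)_w are not isomorphic (linearly homeomorphic), where C(X)_w denotes the Banach space C(X) of continuous real-valued functions with the supremum norm, endowed with its weak topology. -/
open Filter Topology

set_option linter.unusedVariables false

section Aux

open Set Filter Topology

/-- In a T1 space, if `{x}` is not open, every neighborhood of `x` is infinite. -/
lemma aux_nonisolated_nhds_infinite {X : Type*} [TopologicalSpace X] [T1Space X] {x : X}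
    (h : ¬ IsOpen ({x} : Set X)) {N : Set X} (hN : N ∈ nhds x) : N.Infinite := by
  by_contra hfin
  rw [Set.not_infinite] at hfin
  have hS : IsClosed (N \ {x}) := (hfin.subset diff_subset).isClosed
  have hop : IsOpen (interior N \ (N \ {x})) := isOpen_interior.sdiff hS
  have heq : interior N \ (N \ {x}) = {x} := by
    apply Subset.antisymm
    · rintro z ⟨hz1, hz2⟩
      simp only [mem_diff, mem_singleton_iff, not_and, not_not] at hz2
      exact hz2 (interior_subset hz1)
    · rintro z hz
      rw [mem_singleton_iff] at hz
      subst hz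
      exact ⟨mem_interior_iff_mem_nhds.2 hN, fun hc => hc.2 rfl⟩
  exact h (heq ▸ hop)

/-- Splitting step: any infinite open set in a compact Hausdorff space contains a nonempty
open set and a disjoint infinite open set. -/
lemma aux_step {X : Type*} [TopologicalSpace X] [CompactSpace X] [T2Space X]
    {W : Set X} (hWo : IsOpen W) (hWi : W.Infinite) :
    ∃ O V : Set X, IsOpen O ∧ O.Nonempty ∧ O ⊆ W ∧ IsOpen V ∧ V.Infinite ∧ V ⊆ W ∧
      Disjoint O V := by
  obtain ⟨x, hx, y, hy, hxy⟩ := hWi.nontrivial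
  by_cases hiso : IsOpen ({x} : Set X)
  · refine ⟨{x}, W \ {x}, hiso, singleton_nonempty x, singleton_subset_iff.2 hx,
      hWo.sdiff isClosed_singleton, hWi.diff (finite_singleton x), diff_subset, ?_⟩
    exact Set.disjoint_left.2 fun z hz hz2 => hz2.2 hz
  · have hyW : y ∈ W \ {x} := ⟨hy, fun hc => hxy (mem_singleton_iff.1 hc).symm⟩
    have hmem : W \ {x} ∈ nhds y := (hWo.sdiff isClosed_singleton).mem_nhds hyW
    obtain ⟨t, htm, htc, hts⟩ := exists_mem_nhds_isClosed_subset hmem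
    have hxt : x ∉ t := fun hc => (hts hc).2 rfl
    refine ⟨interior t, W \ t, isOpen_interior, ⟨y, mem_interior_iff_mem_nhds.2 htm⟩,
      fun z hz => ((hts (interior_subset hz)).1), hWo.sdiff htc,
      aux_nonisolated_nhds_infinite hiso ((hWo.sdiff htc).mem_nhds ⟨hx, hxt⟩),
      diff_subset, ?_⟩
    exact Set.disjoint_left.2 fun z hz hz2 => hz2.2 (interior_subset hz)

/-- An infinite compact Hausdorff space contains a sequence of pairwise disjoint
nonempty open sets. -/
lemma aux_disjoint_opens (X : Type*) [TopologicalSpace X] [CompactSpace X]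
    [T2Space X] [Infinite X] :
    ∃ O : ℕ → Set X, (∀ n, IsOpen (O n)) ∧ (∀ n, (O n).Nonempty) ∧
      ∀ m n, m ≠ n → Disjoint (O m) (O n) := by
  have key : ∀ p : {W : Set X // IsOpen W ∧ W.Infinite},
      ∃ q : {W : Set X // IsOpen W ∧ W.Infinite} × Set X,
        IsOpen q.2 ∧ q.2.Nonempty ∧ q.2 ⊆ p.1 ∧ q.1.1 ⊆ p.1 ∧ Disjoint q.2 q.1.1 := by
    rintro ⟨W, hWo, hWi⟩
    obtain ⟨O, V, h1, h2, h3, h4, h5, h6, h7⟩ := aux_step hWo hWi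
    exact ⟨(⟨V, h4, h5⟩, O), h1, h2, h3, h6, h7⟩
  choose step h1 h2 h3 h4 h5 using key
  let W : ℕ → {W : Set X // IsOpen W ∧ W.Infinite} :=
    fun n => Nat.rec ⟨Set.univ, isOpen_univ, Set.infinite_univ⟩ (fun _ p => (step p).1) n
  have hWsucc : ∀ n, W (n + 1) = (step (W n)).1 := fun n => rfl
  have hWmono : ∀ m n, m ≤ n → (W n).1 ⊆ (W m).1 := by
    intro m n h
    induction n, h using Nat.le_induction with
    | base => exact subset_rfl
    | succ n hmn ih => exact ((hWsucc n ▸ h4 (W n)) : (W (n+1)).1 ⊆ (W n).1).trans ih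
  refine ⟨fun n => (step (W n)).2, fun n => h1 _, fun n => h2 _, ?_⟩
  have main : ∀ m n, m < n → Disjoint (step (W m)).2 (step (W n)).2 := by
    intro m n hmn
    have hsub : (step (W n)).2 ⊆ (W (m + 1)).1 :=
      (h3 (W n)).trans (hWmono (m + 1) n hmn)
    exact (h5 (W m)).mono_right (by rw [hWsucc m] at hsub; exact hsub)
  intro m n hmn
  rcases lt_or_gt_of_ne hmn with h | h
  · exact main m n h
  · exact (main n m h).symm

/-- Spike functions: continuous `f n` with `f n (x n) = n` and, at every point, all but
at most one of the `f n` vanish. -/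
lemma aux_spikes (X : Type*) [TopologicalSpace X] [CompactSpace X] [T2Space X] [Infinite X] :
    ∃ (f : ℕ → C(X, ℝ)) (x : ℕ → X),
      (∀ n, f n (x n) = n) ∧ (∀ z : X, ∀ᶠ n in atTop, f n z = 0) := by
  obtain ⟨O, hOo, hOne, hOd⟩ := aux_disjoint_opens X
  choose x hx using hOne
  have key : ∀ n, ∃ u : C(X, ℝ), EqOn u 0 (O n)ᶜ ∧ EqOn u 1 {x n} ∧
      ∀ z, u z ∈ Icc (0 : ℝ) 1 := fun n =>
    exists_continuous_zero_one_of_isClosed (hOo n).isClosed_compl isClosed_singleton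
      (disjoint_compl_left.mono_right (singleton_subset_iff.2 (hx n)))
  choose u hu0 hu1 _ using key
  refine ⟨fun n => (n : ℝ) • u n, x, ?_, ?_⟩
  · intro n
    have : u n (x n) = 1 := hu1 n rfl
    simp [this]
  · intro z
    by_cases hz : ∃ m, z ∈ O m
    · obtain ⟨m, hm⟩ := hz
      filter_upwards [eventually_gt_atTop m] with n hn
      have hzn : z ∉ O n := fun hc => (hOd m n hn.ne).le_bot ⟨hm, hc⟩
      have : u n z = 0 := hu0 n hzn
      simp [this]
    · push_neg at hz
      filter_upwards with n
      have : u n z = 0 := hu0 n (hz n)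
      simp [this]

/-- Evaluation at a point, as a continuous linear functional on `C_p(X, ℝ)`. -/
def aux_CpEval {X : Type*} [TopologicalSpace X] (x : X) : ↥(Cp X ℝ) →L[ℝ] ℝ :=
  { toFun := fun f => f.1 x
    map_add' := fun f g => rfl
    map_smul' := fun c f => rfl
    cont := (continuous_apply x).comp continuous_subtype_val }

end Aux

/-- For every infinite compact Hausdorff space `X`, the spaces `C_p(X)`
and `C(X)_w` — the Banach space `C(X)` with the sup-norm, endowed with its weak topology —
are not linearly homeomorphic. -/
theorem statement19 (X : Type*) [TopologicalSpace X] [CompactSpace X] [T2Space X]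
    [Infinite X] :
    ¬ Nonempty (↥(Cp X ℝ) ≃L[ℝ] WeakSpace ℝ C(X, ℝ)) := by
  rintro ⟨T⟩
  obtain ⟨f, x, hfx, hf0⟩ := aux_spikes X
  set F : ℕ → ↥(Cp X ℝ) := fun n => ⟨⇑(f n), (f n).continuous⟩ with hF
  -- the spikes tend to zero pointwise, i.e. to zero in `C_p(X)`
  have hT0 : Tendsto F atTop (𝓝 (0 : ↥(Cp X ℝ))) := by
    rw [tendsto_subtype_rng, tendsto_pi_nhds]
    intro z
    refine Tendsto.congr' ?_ tendsto_const_nhds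
    filter_upwards [hf0 z] with n hn
    exact hn.symm
  -- the functionals `g ↦ (T⁻¹ g)(z)` on the Banach space `C(X)`
  let μ : X → StrongDual ℝ C(X, ℝ) := fun z =>
    ((aux_CpEval z).comp T.symm.toContinuousLinearMap).comp (toWeakSpaceCLM ℝ C(X, ℝ))
  -- they are pointwise bounded (each `T⁻¹ g` is a continuous function on a compact space)
  have pb : ∀ g : C(X, ℝ), ∃ C, ∀ z : X, ‖μ z g‖ ≤ C := by
    intro g
    let h := T.symm (toWeakSpaceCLM ℝ C(X, ℝ) g)
    refine ⟨‖ContinuousMap.mk h.1 h.2‖, fun z => ?_⟩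
    exact ContinuousMap.norm_coe_le_norm (ContinuousMap.mk h.1 h.2) z
  obtain ⟨C, hC⟩ := banach_steinhaus pb
  -- the images `G n = T (F n)`, viewed in the double dual
  let G : ℕ → C(X, ℝ) := fun n => (toWeakSpace ℝ C(X, ℝ)).symm (T (F n))
  have pb2 : ∀ φ : StrongDual ℝ C(X, ℝ), ∃ C0, ∀ n : ℕ,
      ‖NormedSpace.inclusionInDoubleDualLi ℝ (E := C(X, ℝ)) (G n) φ‖ ≤ C0 := by
    intro φ
    have hcont : Continuous fun g : WeakSpace ℝ C(X, ℝ) => φ g :=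
      WeakBilin.eval_continuous _ φ
    have h2 : Tendsto (fun n => φ (T (F n))) atTop (𝓝 (φ (T 0))) :=
      ((hcont.comp T.continuous).tendsto 0).comp hT0
    rw [map_zero] at h2
    have h0 : φ (0 : C(X, ℝ)) = 0 := map_zero φ
    erw [h0] at h2
    obtain ⟨C0, hC0⟩ := h2.norm.bddAbove_range
    exact ⟨C0, fun n => hC0 ⟨n, rfl⟩⟩
  obtain ⟨C', hC'⟩ := banach_steinhaus pb2
  have hGn : ∀ n, ‖G n‖ ≤ C' := by
    intro n
    have : ‖NormedSpace.inclusionInDoubleDualLi ℝ (E := C(X, ℝ)) (G n)‖ ≤ C' := hC' n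
    rwa [(NormedSpace.inclusionInDoubleDualLi ℝ (E := C(X, ℝ))).norm_map (G n)] at this
  obtain ⟨n, hn⟩ := exists_nat_gt (C * C')
  have h1 : μ (x n) (G n) = (n : ℝ) := by
    have e1 : toWeakSpaceCLM ℝ C(X, ℝ) (G n) = T (F n) := rfl
    show (T.symm (toWeakSpaceCLM ℝ C(X, ℝ) (G n))).1 (x n) = (n : ℝ)
    rw [e1, T.symm_apply_apply]
    exact hfx n
  have h2 : (n : ℝ) ≤ C * C' := by
    have hle := (μ (x n)).le_opNorm (G n)
    rw [h1, Real.norm_natCast] at hle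
    refine hle.trans (mul_le_mul (hC (x n)) (hGn n) (norm_nonneg _)
      (le_trans (norm_nonneg _) (hC (x n))))
  linarith
end
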